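/- There exists N ∈ ℕ such that for every integer i ≥ N, (4/(3·2^i)) · ∫_𝔻 ( ∑_{k=2^i}^{2^{i+1}-1} |μ_k(z)|² )² dA(z) ≥ 2^{-30}. -/

import Mathlib

set_option maxHeartbeats 1000000

open MeasureTheory Complex

/-- The hyperbolic metric density `ρ(z) = 4/(1-|z|²)²` on the unit disk. -/
noncomputable def rho (z : ℂ) : ℝ := 4 / (1 - ‖z‖ ^ 2) ^ 2

/-- The tangent basis elements
`μ_k(z) = ((1-|z|²)²/4) · √((2(k+1)³-2(k+1))/π) · conj(z)^(k-1)`, for `k ≥ 1`. -/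
noncomputable def mu (k : ℕ) (z : ℂ) : ℂ :=
  ((((1 - ‖z‖ ^ 2) ^ 2 / 4) *
      Real.sqrt ((2 * ((k : ℝ) + 1) ^ 3 - 2 * ((k : ℝ) + 1)) / Real.pi) : ℝ) : ℂ) *
    (starRingEnd ℂ z) ^ (k - 1)

lemma mu_normsq (k : ℕ) (z : ℂ) :
    ‖mu k z‖ ^ 2 = ((1 - ‖z‖ ^ 2) ^ 2 / 4) ^ 2 *
      ((2 * ((k : ℝ) + 1) ^ 3 - 2 * ((k : ℝ) + 1)) / Real.pi) * (‖z‖ ^ 2) ^ (k - 1) := by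
  have hc : 0 ≤ (2 * ((k : ℝ) + 1) ^ 3 - 2 * ((k : ℝ) + 1)) / Real.pi := by
    apply div_nonneg _ Real.pi_pos.le
    nlinarith [Nat.cast_nonneg (α := ℝ) k, sq_nonneg ((k:ℝ)+1), sq_nonneg (k:ℝ)]
  have hx : 0 ≤ ((1 - ‖z‖ ^ 2) ^ 2 / 4) *
      Real.sqrt ((2 * ((k : ℝ) + 1) ^ 3 - 2 * ((k : ℝ) + 1)) / Real.pi) := by positivity
  have h1 : ‖mu k z‖ = (((1 - ‖z‖ ^ 2) ^ 2 / 4) *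
      Real.sqrt ((2 * ((k : ℝ) + 1) ^ 3 - 2 * ((k : ℝ) + 1)) / Real.pi)) * ‖z‖ ^ (k - 1) := by
    unfold mu
    rw [norm_mul, norm_pow, RCLike.norm_conj, Complex.norm_real, Real.norm_eq_abs,
      _root_.abs_of_nonneg hx]
  rw [h1, mul_pow, mul_pow, Real.sq_sqrt hc, ← pow_mul, mul_comm (k-1) 2, pow_mul]


/-- Proposition 5.4 (analytic content): for all sufficiently large `i`,
`(4/(3·2^i)) ∫_𝔻 (∑_{k=2^i}^{2^{i+1}-1} |μ_k(z)|²)² dA(z) ≥ 2^{-30}`. -/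
theorem curvature_lower_bound_on_Ai :
    ∃ N : ℕ, ∀ i : ℕ, N ≤ i →
      (4 / (3 * 2 ^ i)) *
        ∫ z in Metric.ball (0 : ℂ) 1,
          (∑ k ∈ Finset.Icc (2 ^ i) (2 ^ (i + 1) - 1), ‖mu k z‖ ^ 2) ^ 2 * rho z ≥
      (1 : ℝ) / 2 ^ 30 := by
  use 0
  intro i _
  set n : ℕ := 2 ^ i with hn
  set N : ℝ := (2:ℝ) ^ i with hN
  have hN1 : (1:ℝ) ≤ N := one_le_pow₀ (by norm_num)
  have hN0 : (0:ℝ) < N := by linarith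
  have hcast : ((n : ℕ) : ℝ) = N := by push_cast [hn, hN]; ring
  have hcard : (Finset.Icc (2 ^ i) (2 ^ (i + 1) - 1)).card = n := by
    have h1 : (1:ℕ) ≤ 2 ^ i := Nat.one_le_two_pow
    rw [Nat.card_Icc, pow_succ]; omega
  -- annulus radii
  have h38 : (0:ℝ) ≤ 1 - 3 / (8 * N) := by
    have : 3 / (8 * N) ≤ 3 / 8 := by
      apply div_le_div_of_nonneg_left (by norm_num) (by norm_num) (by linarith)
    linarith
  have h14 : (0:ℝ) ≤ 1 - 1 / (4 * N) := by
    have : 1 / (4 * N) ≤ 1 / 4 := by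
      apply div_le_div_of_nonneg_left (by norm_num) (by norm_num) (by linarith)
    linarith
  set s1 : ℝ := Real.sqrt (1 - 3 / (8 * N)) with hs1
  set s2 : ℝ := Real.sqrt (1 - 1 / (4 * N)) with hs2
  have hs1sq : s1 ^ 2 = 1 - 3 / (8 * N) := Real.sq_sqrt h38
  have hs2sq : s2 ^ 2 = 1 - 1 / (4 * N) := Real.sq_sqrt h14
  have hs1s2 : s1 ≤ s2 := by
    apply Real.sqrt_le_sqrt
    have : 1 / (4 * N) ≤ 3 / (8 * N) := by
      rw [div_le_div_iff₀ (by positivity) (by positivity)]; nlinarith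
    linarith
  have hs2lt1 : s2 < 1 := by
    have h2 : s2 < Real.sqrt 1 := by
      apply Real.sqrt_lt_sqrt h14
      have : 0 < 1 / (4 * N) := by positivity
      linarith
    simpa using h2
  set A : Set ℂ := Metric.closedBall 0 s2 \ Metric.ball 0 s1 with hA
  have hsubA : A ⊆ Metric.ball (0:ℂ) 1 := by
    intro z hz
    rcases hz with ⟨hz1, _⟩
    rw [Metric.mem_closedBall, dist_zero_right] at hz1
    rw [Metric.mem_ball, dist_zero_right]; linarith
  have hzbounds : ∀ z ∈ A, 1/(4*N) ≤ 1 - ‖z‖^2 ∧ 1 - ‖z‖^2 ≤ 3/(8*N) := by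
    intro z hz; rcases hz with ⟨hz1, hz2⟩
    rw [Metric.mem_closedBall, dist_zero_right] at hz1
    rw [Metric.mem_ball, dist_zero_right, not_lt] at hz2
    have h1 : ‖z‖^2 ≤ s2^2 := pow_le_pow_left₀ (norm_nonneg z) hz1 2
    have h2 : s1^2 ≤ ‖z‖^2 := pow_le_pow_left₀ (Real.sqrt_nonneg _) hz2 2
    rw [hs2sq] at h1; rw [hs1sq] at h2
    constructor <;> linarith
  have key : ∀ z ∈ A, 1/(8192*Real.pi) ≤
      ∑ k ∈ Finset.Icc (2 ^ i) (2 ^ (i + 1) - 1), ‖mu k z‖^2 := by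
    intro z hz
    obtain ⟨hlo, hhi⟩ := hzbounds z hz
    have hN4 : (0:ℝ) < 1/(4*N) := by positivity
    have ht0 : (0:ℝ) ≤ ‖z‖^2 := by positivity
    have ht1 : ‖z‖^2 ≤ 1 := by nlinarith
    set b : ℝ := ((1/(4*N))^2/4)^2 * (2*N^3/Real.pi) * (1/4) with hb
    have hterm : ∀ k ∈ Finset.Icc (2 ^ i) (2 ^ (i + 1) - 1), b ≤ ‖mu k z‖^2 := by
      intro k hk
      rw [Finset.mem_Icc] at hk
      have hkR : N ≤ (k:ℝ) := by rw [← hcast]; exact_mod_cast hk.1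
      have hk2 : k - 1 ≤ 2*n := by
        have h1 : (1:ℕ) ≤ 2^i := Nat.one_le_two_pow
        have h2 : 2^(i+1) = 2*n := by rw [pow_succ, hn]; ring
        omega
      rw [mu_normsq]
      have p3 : (1:ℝ)/4 ≤ (‖z‖^2)^(k-1) := by
        have e1 : (‖z‖^2)^(2*n) ≤ (‖z‖^2)^(k-1) := pow_le_pow_of_le_one ht0 ht1 hk2
        have e2 : (1 - 3/(8*N))^(2*n) ≤ (‖z‖^2)^(2*n) := pow_le_pow_left₀ h38 (by linarith) _
        have e3 : (1:ℝ)/4 ≤ (1 - 3/(8*N))^(2*n) := by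
          have hB := one_add_mul_le_pow (a := -(3/(8*N)))
            (by nlinarith : (-2:ℝ) ≤ -(3/(8*N))) (2*n)
          have hc2 : ((2*n : ℕ):ℝ) = 2*N := by push_cast; rw [hcast]
          rw [hc2] at hB
          have h34 : 2*N*(3/(8*N)) = 3/4 := by field_simp; ring
          have hre : (1:ℝ) + -(3/(8*N)) = 1 - 3/(8*N) := by ring
          rw [hre] at hB
          linarith
        linarith
      have p2 : 2*N^3 ≤ 2*((k:ℝ)+1)^3 - 2*((k:ℝ)+1) := by
        nlinarith [pow_le_pow_left₀ hN0.le hkR 3, hkR, hN0]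
      have p1 : ((1/(4*N))^2/4)^2 ≤ ((1 - ‖z‖^2)^2/4)^2 := by
        have q1 : (1/(4*N))^2 ≤ (1 - ‖z‖^2)^2 := pow_le_pow_left₀ hN4.le hlo 2
        have q2 : (1/(4*N))^2/4 ≤ (1 - ‖z‖^2)^2/4 := by linarith
        exact pow_le_pow_left₀ (by positivity) q2 2
      rw [hb]
      have hppos := Real.pi_pos
      have hcnn : (0:ℝ) ≤ (2*((k:ℝ)+1)^3 - 2*((k:ℝ)+1))/Real.pi :=
        div_nonneg (by nlinarith [p2, pow_pos hN0 3]) hppos.le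
      gcongr
    have hsum := Finset.card_nsmul_le_sum (Finset.Icc (2 ^ i) (2 ^ (i + 1) - 1)) _ b hterm
    rw [hcard, nsmul_eq_mul, hcast] at hsum
    have heq : N * b = 1/(8192*Real.pi) := by
      rw [hb]; field_simp; ring
    linarith
  have hrho : ∀ z ∈ A, 256*N^2/9 ≤ rho z := by
    intro z hz
    obtain ⟨hlo, hhi⟩ := hzbounds z hz
    have hN4 : (0:ℝ) < 1/(4*N) := by positivity
    have hpos : (0:ℝ) < 1 - ‖z‖^2 := by linarith
    have hsq : (1 - ‖z‖^2)^2 ≤ (3/(8*N))^2 := pow_le_pow_left₀ hpos.le hhi 2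
    rw [rho]
    rw [show (256:ℝ)*N^2/9 = 4/((3/(8*N))^2) by field_simp; ring]
    apply div_le_div_of_nonneg_left (by norm_num) (by positivity) hsq
  -- integrand
  set F : ℂ → ℝ := fun z =>
    (∑ k ∈ Finset.Icc (2 ^ i) (2 ^ (i + 1) - 1), ‖mu k z‖ ^ 2) ^ 2 * rho z with hF
  have hFnonneg : ∀ z, 0 ≤ F z := by
    intro z
    apply mul_nonneg (sq_nonneg _)
    rw [rho]; positivity
  set c : ℝ := (1/(8192*Real.pi))^2 * (256*N^2/9) with hc
  have hFbound : ∀ z ∈ A, c ≤ F z := by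
    intro z hz
    have h1 := key z hz
    have h2 := hrho z hz
    have h3 : (1/(8192*Real.pi))^2 ≤
        (∑ k ∈ Finset.Icc (2 ^ i) (2 ^ (i + 1) - 1), ‖mu k z‖ ^ 2) ^ 2 :=
      pow_le_pow_left₀ (by positivity) h1 2
    rw [hc, hF]
    have : (0:ℝ) ≤ 256*N^2/9 := by positivity
    exact mul_le_mul h3 h2 this (sq_nonneg _)
  -- integrability
  set P : ℂ → ℝ := fun z => ∑ k ∈ Finset.Icc (2 ^ i : ℕ) (2 ^ (i + 1) - 1 : ℕ),
    ((2 * ((k : ℝ) + 1) ^ 3 - 2 * ((k : ℝ) + 1)) / Real.pi) * (‖z‖^2)^(k-1) with hP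
  set H : ℂ → ℝ := fun z => (1 - ‖z‖^2)^6 * (P z)^2 / 64 with hH
  have hn2 : Continuous fun z : ℂ => ‖z‖^2 := continuous_norm.pow 2
  have hPcont : Continuous P := by
    apply continuous_finset_sum
    intro k _
    exact continuous_const.mul (hn2.pow (k-1))
  have hHcont : Continuous H := by
    exact (((continuous_const.sub hn2).pow 6).mul (hPcont.pow 2)).div_const 64
  have hFeqH : Set.EqOn F H (Metric.ball (0:ℂ) 1) := by
    intro z hz
    rw [Metric.mem_ball, dist_zero_right] at hz
    have h1t : (1:ℝ) - ‖z‖^2 ≠ 0 := by nlinarith [norm_nonneg z]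
    have hsum_eq : (∑ k ∈ Finset.Icc (2 ^ i) (2 ^ (i + 1) - 1), ‖mu k z‖ ^ 2)
        = ((1 - ‖z‖^2)^2/4)^2 * P z := by
      rw [hP, Finset.mul_sum]
      refine Finset.sum_congr rfl fun k _ => ?_
      rw [mu_normsq]; ring
    have expand : ∀ Q t : ℝ, t ≠ 0 → ((t^2/4)^2 * Q)^2 * (4/t^2) = t^6*Q^2/64 := by
      intro Q t ht; field_simp; ring
    rw [hF, hH]
    simp only
    rw [hsum_eq, rho]
    exact expand (P z) _ h1t
  have hHint : IntegrableOn H (Metric.ball (0:ℂ) 1) := by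
    exact (hHcont.continuousOn.integrableOn_compact (isCompact_closedBall 0 1)).mono_set
      Metric.ball_subset_closedBall
  have hFint : IntegrableOn F (Metric.ball (0:ℂ) 1) := by
    exact (hHint.congr_fun (fun z hz => (hFeqH hz).symm) Metric.isOpen_ball.measurableSet)
  have hMeasA : MeasurableSet A :=
    measurableSet_closedBall.diff measurableSet_ball
  have hAfin : volume A ≠ ⊤ :=
    ((measure_mono hsubA).trans_lt measure_ball_lt_top).ne
  have hvolA : (volume A).toReal = Real.pi/(8*N) := by
    rw [hA]
    rw [measure_diff (Metric.ball_subset_closedBall.trans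
        (Metric.closedBall_subset_closedBall hs1s2))
      Metric.isOpen_ball.measurableSet.nullMeasurableSet measure_ball_lt_top.ne]
    rw [Complex.volume_closedBall, Complex.volume_ball]
    rw [ENNReal.toReal_sub_of_le]
    · rw [ENNReal.toReal_mul, ENNReal.toReal_mul, ENNReal.toReal_pow, ENNReal.toReal_pow,
        ENNReal.toReal_ofReal (Real.sqrt_nonneg _), ENNReal.toReal_ofReal (Real.sqrt_nonneg _)]
      rw [ENNReal.coe_toReal, NNReal.coe_real_pi]
      rw [hs1sq, hs2sq]
      field_simp
      ring
    · exact mul_le_mul_left (pow_le_pow_left' (ENNReal.ofReal_le_ofReal hs1s2) 2) _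
    · exact ENNReal.mul_ne_top (ENNReal.pow_ne_top ENNReal.ofReal_ne_top) ENNReal.coe_ne_top
  have step2 : c * (volume A).toReal ≤ ∫ z in A, F z :=
    by have h := setIntegral_ge_of_const_le hMeasA hAfin hFbound (hFint.mono_set hsubA); rw [smul_eq_mul, mul_comm] at h; exact h
  have step1 : (∫ z in A, F z) ≤ ∫ z in Metric.ball (0:ℂ) 1, F z :=
    setIntegral_mono_set hFint (Filter.Eventually.of_forall hFnonneg)
      (HasSubset.Subset.eventuallyLE hsubA)
  rw [hvolA] at step2
  have hint : c * (Real.pi/(8*N)) ≤ ∫ z in Metric.ball (0:ℂ) 1, F z := le_trans step2 step1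
  rw [ge_iff_le]
  calc (1:ℝ)/2^30 ≤ 4/(3*N) * (c * (Real.pi/(8*N))) := by
        rw [hc]
        have h4 := Real.pi_le_four
        have h0 := Real.pi_pos
        rw [show 4/(3*N) * ((1/(8192*Real.pi))^2 * (256*N^2/9) * (Real.pi/(8*N)))
            = 1/(14155776*Real.pi) from by field_simp; ring]
        rw [div_le_div_iff₀ (by norm_num) (by positivity)]
        nlinarith
    _ ≤ 4/(3*N) * ∫ z in Metric.ball (0:ℂ) 1, F z :=
        mul_le_mul_of_nonneg_left hint (by positivity)
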